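/- Let (M, Σ_M, μ_M) be a measure space, (N, d_N) a complete metric space, and h : M → N strongly measurable. Let c : [a,b] → L^1_h(M,N) be a curve with respect to the metric D_1 that is right-continuous with left limits on [a,b), left-continuous at b, and satisfies Var_{D_1}(c;[a,b]) < ∞. Then there exists a Borel measurable ĉ : [a,b]×M → N with separable range such that: (a) for EVERY t ∈ [a,b], ĉ(t,·) is a representative of c(t); (b) for μ_M-a.e. x ∈ M, the curve t ↦ ĉ(t,x) is right-continuous with left limits on [a,b), left-continuous at b, and has Var_N(ĉ(·,x);[a,b]) < ∞; and (c) for all a ≤ s < t ≤ b, Var_{D_1}(c;(s,t)) = ∫_M Var_N(ĉ(·,x);(s,t)) dμ_M(x). -/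

import Mathlib

set_option linter.unusedSectionVars false

open MeasureTheory ENNReal Set Filter Topology TopologicalSpace

noncomputable section

namespace NLS

variable {α : Type*} [MeasurableSpace α] {N : Type*} [MetricSpace N]
  [MeasurableSpace N] [BorelSpace N]

/-- "Strongly measurable": Borel measurable with separable range. -/
def SM (f : α → N) : Prop :=
  Measurable f ∧ TopologicalSpace.IsSeparable (Set.range f)

theorem SM.aesm {f : α → N} (hf : SM f) (μ : Measure α) :
    AEStronglyMeasurable f μ :=
  (stronglyMeasurable_iff_measurable_separable.2 ⟨hf.1, hf.2⟩).aestronglyMeasurable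

/-- The `L^p` (extended) distance between two maps with values in a metric space;
for `p < ∞` it is `(∫ d(f x, g x)^p dμ)^{1/p}` and for `p = ∞` the essential supremum
of `x ↦ d(f x, g x)`. -/
def Dp (μ : Measure α) (p : ℝ≥0∞) (f g : α → N) : ℝ≥0∞ :=
  eLpNorm (fun x => dist (f x) (g x)) p μ

theorem Dp_self (μ : Measure α) (p : ℝ≥0∞) (f : α → N) : Dp μ p f f = 0 := by
  unfold Dp
  simp only [dist_self]
  exact eLpNorm_zero'

theorem Dp_comm (μ : Measure α) (p : ℝ≥0∞) (f g : α → N) : Dp μ p f g = Dp μ p g f := by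
  unfold Dp
  simp only [dist_comm]

theorem Dp_triangle {μ : Measure α} {p : ℝ≥0∞} (hp : 1 ≤ p) {f g k : α → N}
    (hf : AEStronglyMeasurable f μ) (hg : AEStronglyMeasurable g μ)
    (hk : AEStronglyMeasurable k μ) :
    Dp μ p f k ≤ Dp μ p f g + Dp μ p g k := by
  have h1 : Dp μ p f k ≤
      eLpNorm ((fun x => dist (f x) (g x)) + fun x => dist (g x) (k x)) p μ := by
    refine eLpNorm_mono fun x => ?_
    simp only [Pi.add_apply, Real.norm_eq_abs]
    rw [abs_of_nonneg dist_nonneg]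
    exact (dist_triangle (f x) (g x) (k x)).trans (le_abs_self _)
  exact h1.trans (eLpNorm_add_le (hf.dist hg) (hg.dist hk) hp)

/-- The nonlinear Lebesgue space `L^p_h(α, N)` with base map `h`, presented by
representatives: Borel measurable, separably valued maps at finite `D_p`-distance
from `h`.  Two representatives at `D_p`-distance `0` (equivalently, `μ`-a.e. equal)
represent the same element of the quotient nonlinear Lebesgue space; accordingly the
canonical structure below is a pseudometric space whose metric (separation) quotient is
the actual nonlinear Lebesgue space.  All topological and Borel-measurability notions for
the quotient correspond exactly to those of this pseudometric space. -/
def NLp (μ : Measure α) (h : α → N) (_hh : SM h) (p : ℝ≥0∞) : Type _ :=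
  {f : α → N // SM f ∧ Dp μ p f h ≠ ∞}

namespace NLp

variable {μ : Measure α} {h : α → N} {hh : SM h} {p : ℝ≥0∞}

def pem (μ : Measure α) (h : α → N) (hh : SM h) (p : ℝ≥0∞) (hp : 1 ≤ p) :
    PseudoEMetricSpace (NLp μ h hh p) where
  edist f g := Dp μ p f.1 g.1
  edist_self f := Dp_self μ p f.1
  edist_comm f g := Dp_comm μ p f.1 g.1
  edist_triangle f g k := Dp_triangle hp (f.2.1.aesm μ) (g.2.1.aesm μ) (k.2.1.aesm μ)

theorem dp_ne_top (hp : 1 ≤ p) (f g : NLp μ h hh p) : Dp μ p f.1 g.1 ≠ ∞ := by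
  have htri := Dp_triangle hp (f.2.1.aesm μ) (hh.aesm μ) (g.2.1.aesm μ)
  have h2 : Dp μ p h g.1 ≠ ∞ := by rw [Dp_comm]; exact g.2.2
  exact ne_top_of_le_ne_top (ENNReal.add_ne_top.2 ⟨f.2.2, h2⟩) htri

/-- The `D_p` pseudometric on the nonlinear Lebesgue space. -/
instance [hp : Fact (1 ≤ p)] : PseudoMetricSpace (NLp μ h hh p) :=
  @PseudoEMetricSpace.toPseudoMetricSpace _ (pem μ h hh p hp.out)
    (fun f g => dp_ne_top hp.out f g)

instance [Fact (1 ≤ p)] : MeasurableSpace (NLp μ h hh p) := borel _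
instance [Fact (1 ≤ p)] : BorelSpace (NLp μ h hh p) := ⟨rfl⟩

theorem edist_def [Fact (1 ≤ p)] (f g : NLp μ h hh p) :
    edist f g = Dp μ p f.1 g.1 := rfl

theorem dist_def [Fact (1 ≤ p)] (f g : NLp μ h hh p) :
    dist f g = (Dp μ p f.1 g.1).toReal := rfl

end NLp

/-- Absolutely continuous curves: `c ∈ AC^p([a,b], X)`. -/
def MemACp {X : Type*} [PseudoMetricSpace X] (p : ℝ≥0∞) (a b : ℝ) (c : ℝ → X) : Prop :=
  ∃ m : ℝ → ℝ, MemLp m p (volume.restrict (Set.Icc a b)) ∧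
    ∀ s t : ℝ, a ≤ s → s ≤ t → t ≤ b → dist (c s) (c t) ≤ ∫ r in s..t, m r

/-- The metric derivative of a curve at `t` (limit of difference quotients within `[a,b]`). -/
def mder {X : Type*} [PseudoMetricSpace X] (a b : ℝ) (c : ℝ → X) (t : ℝ) : ℝ :=
  limUnder (𝓝[Set.Icc a b \ {t}] t) fun s => dist (c s) (c t) / |s - t|

instance : Fact ((1 : ℝ≥0∞) ≤ 1) := ⟨le_rfl⟩

section VarHelpers
variable {X : Type*} [PseudoEMetricSpace X]


lemma evar_le {f : ℝ → X} {s : Set ℝ} {C : ℝ≥0∞}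
    (h : ∀ (k : ℕ) (u : ℕ → ℝ), Monotone u → (∀ i, u i ∈ s) →
      ∑ i ∈ Finset.range k, edist (f (u (i+1))) (f (u i)) ≤ C) :
    eVariationOn f s ≤ C := by
  refine iSup_le fun p => h p.1 p.2.1 p.2.2.1 p.2.2.2

lemma edist_le_sum_Ico (v : ℕ → X) {i j : ℕ} (hij : i ≤ j) :
    edist (v j) (v i) ≤ ∑ k ∈ Finset.Ico i j, edist (v (k+1)) (v k) := by
  induction j, hij using Nat.le_induction with
  | base => simp
  | succ j hij ih =>
    rw [Finset.sum_Ico_succ_top hij]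
    exact (edist_triangle _ (v j) _).trans (by rw [add_comm]; exact add_le_add ih le_rfl)

lemma sum_reindex_le (v : ℕ → X) {φ : ℕ → ℕ} (hφ : Monotone φ) (k : ℕ) :
    ∑ i ∈ Finset.range k, edist (v (φ (i+1))) (v (φ i)) ≤
      ∑ j ∈ Finset.Ico (φ 0) (φ k), edist (v (j+1)) (v j) := by
  induction k with
  | zero => simp
  | succ k ih =>
    rw [Finset.sum_range_succ, ← Finset.sum_Ico_consecutive _ (hφ (Nat.zero_le k)) (hφ (Nat.le_succ k))]
    exact add_le_add ih (edist_le_sum_Ico v (hφ (Nat.le_succ k)))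

/-- Enumeration data: nested sorted finite approximations of a countable set. -/
lemma lemA_data (e : ℕ → ℝ) :
    ∃ (m : ℕ → ℕ) (w : ℕ → ℕ → ℝ), (∀ n, Monotone (w n)) ∧ (∀ n i, w n i ∈ range e) ∧
      (∀ n n', n ≤ n' → ∀ i, i ≤ m n → ∃ j, j ≤ m n' ∧ w n' j = w n i) ∧
      (∀ i, ∃ n, ∃ j, j ≤ m n ∧ w n j = e i) ∧
      (∀ (n k : ℕ) (u : ℕ → ℝ), Monotone u → (∀ i, ∃ j, j ≤ m n ∧ w n j = u i) →
        ∃ φ : ℕ → ℕ, Monotone φ ∧ φ k ≤ m n ∧ ∀ i, w n (φ i) = u i) := by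
  classical
  set F : ℕ → Finset ℝ := fun n => (Finset.range (n+1)).image e with hF
  have hFne : ∀ n, 0 < (F n).card := by
    intro n
    have : e 0 ∈ F n := Finset.mem_image.2 ⟨0, by simp, rfl⟩
    exact Finset.card_pos.2 ⟨_, this⟩
  have hFsub : ∀ {n n'}, n ≤ n' → F n ⊆ F n' := by
    intro n n' h
    exact Finset.image_subset_image (by intro x hx; simp only [Finset.mem_range] at *; omega)
  have hFrange : ∀ n, (F n : Set ℝ) ⊆ range e := by
    intro n x hx
    rcases Finset.mem_image.1 (Finset.mem_coe.1 hx) with ⟨j, _, rfl⟩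
    exact mem_range_self j
  set m : ℕ → ℕ := fun n => (F n).card - 1 with hm
  have hmin : ∀ n i, min i (m n) < (F n).card := fun n i => by
    have := hFne n; simp only [hm]; omega
  set w : ℕ → ℕ → ℝ := fun n i => ((F n).orderIsoOfFin rfl ⟨min i (m n), hmin n i⟩ : ℝ) with hw
  have hwmono : ∀ n, Monotone (w n) := by
    intro n i j hij
    have h1 : (⟨min i (m n), hmin n i⟩ : Fin (F n).card) ≤ ⟨min j (m n), hmin n j⟩ := by
      simp only [Fin.mk_le_mk]; omega
    exact Subtype.coe_le_coe.2 (((F n).orderIsoOfFin rfl).monotone h1)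
  have hwmem : ∀ n i, w n i ∈ F n := fun n i => ((F n).orderIsoOfFin rfl _).2
  -- every element of `F n` is some `w n j` with `j ≤ m n`
  have hidx : ∀ n (x : ℝ), x ∈ F n → ∃ j, j ≤ m n ∧ w n j = x := by
    intro n x hx
    set ψ : Fin (F n).card := ((F n).orderIsoOfFin rfl).symm ⟨x, hx⟩ with hψ
    refine ⟨(ψ : ℕ), by have := ψ.isLt; have := hFne n; simp only [hm]; omega, ?_⟩
    have h1 : (⟨min (ψ : ℕ) (m n), hmin n _⟩ : Fin (F n).card) = ψ := by
      ext
      have := ψ.isLt; have := hFne n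
      simp only [hm]; omega
    simp only [hw]
    rw [h1]
    exact congrArg Subtype.val (((F n).orderIsoOfFin rfl).apply_symm_apply ⟨x, hx⟩)
  refine ⟨m, w, hwmono, fun n i => hFrange n (hwmem n i), ?_, ?_, ?_⟩
  · intro n n' hnn' i _
    exact hidx n' _ (hFsub hnn' (hwmem n i))
  · intro i
    exact ⟨i, hidx i (e i) (Finset.mem_image.2 ⟨i, Finset.mem_range.2 (by omega), rfl⟩)⟩
  · intro n k u hu hus
    have humem : ∀ i, u i ∈ F n := by
      intro i
      obtain ⟨j, _, hj⟩ := hus i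
      exact hj ▸ hwmem n j
    set ψ : ℕ → Fin (F n).card := fun i => ((F n).orderIsoOfFin rfl).symm ⟨u i, humem i⟩ with hψ
    set φ : ℕ → ℕ := fun i => (ψ i : ℕ) with hφ
    have hφmono : Monotone φ := by
      intro i j hij
      exact ((F n).orderIsoOfFin rfl).symm.monotone (Subtype.mk_le_mk.2 (hu hij))
    have hwφ : ∀ i, w n (φ i) = u i := by
      intro i
      have h1 : φ i ≤ m n := by
        have h2 := (ψ i).isLt; have h3 := hFne n; simp only [hφ, hm]; omega
      have : (⟨min (φ i) (m n), hmin n (φ i)⟩ : Fin (F n).card) = ψ i := by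
        ext; simp [min_eq_left h1]; rfl
      simp only [hw, this, hψ]
      exact congrArg Subtype.val (((F n).orderIsoOfFin rfl).apply_symm_apply ⟨u i, humem i⟩)
    refine ⟨φ, hφmono, ?_, hwφ⟩
    have h2 := (ψ k).isLt; have h3 := hFne n; simp only [hφ, hm]; omega

/-- The variation over a countable range is a monotone countable supremum
of explicit finite sums. -/
lemma lemA_sums {X : Type*} [PseudoEMetricSpace X] (e : ℕ → ℝ) (m : ℕ → ℕ) (w : ℕ → ℕ → ℝ)
    (hwmono : ∀ n, Monotone (w n)) (hwmem : ∀ n i, w n i ∈ range e)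
    (hQ1 : ∀ n n', n ≤ n' → ∀ i, i ≤ m n → ∃ j, j ≤ m n' ∧ w n' j = w n i)
    (hQ3 : ∀ i, ∃ n, ∃ j, j ≤ m n ∧ w n j = e i)
    (hQ2 : ∀ (n k : ℕ) (u : ℕ → ℝ), Monotone u → (∀ i, ∃ j, j ≤ m n ∧ w n j = u i) →
      ∃ φ : ℕ → ℕ, Monotone φ ∧ φ k ≤ m n ∧ ∀ i, w n (φ i) = u i) (g : ℝ → X) :
    (Monotone fun n => ∑ i ∈ Finset.range (m n), edist (g (w n (i+1))) (g (w n i))) ∧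
      eVariationOn g (range e) =
        ⨆ n, ∑ i ∈ Finset.range (m n), edist (g (w n (i+1))) (g (w n i)) := by
  have key : ∀ (n k : ℕ) (u : ℕ → ℝ), Monotone u → (∀ i, ∃ j, j ≤ m n ∧ w n j = u i) →
      ∑ i ∈ Finset.range k, edist (g (u (i+1))) (g (u i)) ≤
        ∑ i ∈ Finset.range (m n), edist (g (w n (i+1))) (g (w n i)) := by
    intro n k u hu hus
    obtain ⟨φ, hφmono, hφk, hwφ⟩ := hQ2 n k u hu hus
    calc ∑ i ∈ Finset.range k, edist (g (u (i+1))) (g (u i))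
        = ∑ i ∈ Finset.range k, edist ((g ∘ w n) (φ (i+1))) ((g ∘ w n) (φ i)) := by
          refine Finset.sum_congr rfl fun i _ => by simp [Function.comp, hwφ]
      _ ≤ ∑ j ∈ Finset.Ico (φ 0) (φ k), edist ((g ∘ w n) (j+1)) ((g ∘ w n) (j)) :=
          sum_reindex_le (g ∘ w n) hφmono k
      _ ≤ ∑ i ∈ Finset.range (m n), edist (g (w n (i+1))) (g (w n i)) := by
          refine Finset.sum_le_sum_of_subset ?_
          intro j hj
          simp only [Finset.mem_Ico] at hj
          simp only [Finset.mem_range]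
          omega
  constructor
  · intro n n' hnn'
    have hsum : ∑ i ∈ Finset.range (m n), edist (g (w n (i+1))) (g (w n i))
        = ∑ i ∈ Finset.range (m n),
            edist (g (w n (min (i+1) (m n)))) (g (w n (min i (m n)))) := by
      refine Finset.sum_congr rfl fun i hi => ?_
      simp only [Finset.mem_range] at hi
      rw [min_eq_left (by omega), min_eq_left (by omega)]
    dsimp only
    rw [hsum]
    exact key n' (m n) (fun i => w n (min i (m n)))
      (fun i j hij => hwmono n (by omega))
      (fun i => hQ1 n n' hnn' (min i (m n)) (min_le_right _ _))
  · refine le_antisymm ?_ ?_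
    · refine evar_le fun k u hu hus => ?_
      have hch : ∀ i, ∃ n j, j ≤ m n ∧ w n j = u i := by
        intro i
        obtain ⟨l, hl⟩ := hus i
        obtain ⟨n, j, hj, hwj⟩ := hQ3 l
        exact ⟨n, j, hj, by rw [hwj, hl]⟩
      choose nn jj hjj hwjj using hch
      set n := (Finset.range (k+1)).sup nn with hn
      have hmem : ∀ i, i ≤ k → ∃ j, j ≤ m n ∧ w n j = u i := by
        intro i hik
        have h1 : nn i ≤ n := Finset.le_sup (Finset.mem_range.2 (by omega))
        obtain ⟨j', hj', hwj'⟩ := hQ1 (nn i) n h1 (jj i) (hjj i)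
        exact ⟨j', hj', by rw [hwj', hwjj]⟩
      set u' : ℕ → ℝ := fun i => u (min i k) with hu'
      have hsum : ∑ i ∈ Finset.range k, edist (g (u (i+1))) (g (u i))
          = ∑ i ∈ Finset.range k, edist (g (u' (i+1))) (g (u' i)) := by
        refine Finset.sum_congr rfl fun i hi => ?_
        simp only [Finset.mem_range] at hi
        simp only [hu']
        rw [min_eq_left (by omega), min_eq_left (by omega)]
      rw [hsum]
      exact le_iSup_of_le n (key n k u' (fun i j hij => hu (by omega))
        fun i => hmem _ (min_le_right i k))
    · refine iSup_le fun n => eVariationOn.sum_le (f := g) (hwmono n) fun i => hwmem n i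

lemma tail_right {g : ℝ → X} {s : Set ℝ} (hv : eVariationOn g s ≠ ∞) (t : ℝ) {ε : ℝ≥0∞}
    (hε : 0 < ε) : ∃ v, t < v ∧ eVariationOn g (s ∩ Ioo t v) ≤ ε := by
  set h : ℝ → ℝ≥0∞ := fun r => eVariationOn g (s ∩ Ioi r) with hh
  have hfin : ∀ r, h r ≠ ∞ := fun r =>
    ne_top_of_le_ne_top hv (eVariationOn.mono g inter_subset_left)
  set L : ℝ≥0∞ := ⨆ r : Ioi t, h r with hL
  have hLfin : L ≠ ∞ := by
    refine ne_top_of_le_ne_top hv (iSup_le fun r => eVariationOn.mono g inter_subset_left)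
  obtain ⟨r0, hr0t, hr0⟩ : ∃ r0, t < r0 ∧ L ≤ h r0 + ε := by
    by_cases hL0 : L = 0
    · exact ⟨t + 1, by linarith, by simp [hL0]⟩
    · rcases eq_or_ne ε ∞ with rfl | hεfin
      · exact ⟨t + 1, by linarith, le_top.trans_eq (by simp)⟩
      · have h1 : L - ε < L := ENNReal.sub_lt_self hLfin hL0 hε.ne'
        rw [hL, lt_iSup_iff] at h1
        obtain ⟨⟨r0, hr0⟩, h2⟩ := h1
        exact ⟨r0, hr0, tsub_le_iff_right.1 h2.le⟩
  refine ⟨r0, hr0t, ?_⟩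
  have key : ∀ r1 ∈ Ioo t r0, eVariationOn g (s ∩ Ioo r1 r0) ≤ ε := by
    intro r1 hr1
    have hsplit := eVariationOn.add_le_union g
      (s := s ∩ Ioo r1 r0) (t := s ∩ Ioi r0)
      (fun x hx y hy => (hx.2.2.le.trans hy.2.le))
    have hsub : (s ∩ Ioo r1 r0) ∪ (s ∩ Ioi r0) ⊆ s ∩ Ioi r1 := by
      rintro x (⟨hxs, hx1, hx2⟩ | ⟨hxs, hx⟩)
      · exact ⟨hxs, hx1⟩
      · exact ⟨hxs, hr1.2.trans hx⟩
    have h3 : eVariationOn g (s ∩ Ioo r1 r0) + h r0 ≤ h r0 + ε :=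
      (hsplit.trans (eVariationOn.mono g hsub)).trans
        ((le_iSup (fun r : Ioi t => h r) ⟨r1, hr1.1⟩).trans hr0)
    rwa [add_comm (h r0) ε, ENNReal.add_le_add_iff_right (hfin r0)] at h3
  refine evar_le fun k u hu hus => ?_
  rcases eq_or_ne k 0 with rfl | hk
  · simp
  · obtain ⟨r1, hr11, hr12⟩ := exists_between (hus 0).2.1
    have : ∀ i, u i ∈ s ∩ Ioo r1 r0 :=
      fun i => ⟨(hus i).1, hr12.trans_le (hu (Nat.zero_le i)), (hus i).2.2⟩
    exact (eVariationOn.sum_le (f := g) hu this).trans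
      (key r1 ⟨hr11, hr12.trans (hus 0).2.2⟩)

lemma tail_left {g : ℝ → X} {s : Set ℝ} (hv : eVariationOn g s ≠ ∞) (β : ℝ) {ε : ℝ≥0∞}
    (hε : 0 < ε) : ∃ w, w < β ∧ eVariationOn g (s ∩ Ioo w β) ≤ ε := by
  set h : ℝ → ℝ≥0∞ := fun r => eVariationOn g (s ∩ Iio r) with hh
  have hfin : ∀ r, h r ≠ ∞ := fun r =>
    ne_top_of_le_ne_top hv (eVariationOn.mono g inter_subset_left)
  set L : ℝ≥0∞ := ⨆ r : Iio β, h r with hL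
  have hLfin : L ≠ ∞ := by
    refine ne_top_of_le_ne_top hv (iSup_le fun r => eVariationOn.mono g inter_subset_left)
  obtain ⟨r0, hr0t, hr0⟩ : ∃ r0, r0 < β ∧ L ≤ h r0 + ε := by
    by_cases hL0 : L = 0
    · exact ⟨β - 1, by linarith, by simp [hL0]⟩
    · rcases eq_or_ne ε ∞ with rfl | hεfin
      · exact ⟨β - 1, by linarith, le_top.trans_eq (by simp)⟩
      · have h1 : L - ε < L := ENNReal.sub_lt_self hLfin hL0 hε.ne'
        rw [hL, lt_iSup_iff] at h1
        obtain ⟨⟨r0, hr0⟩, h2⟩ := h1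
        exact ⟨r0, hr0, tsub_le_iff_right.1 h2.le⟩
  refine ⟨r0, hr0t, ?_⟩
  have key : ∀ r1 ∈ Ioo r0 β, eVariationOn g (s ∩ Ioo r0 r1) ≤ ε := by
    intro r1 hr1
    have hsplit := eVariationOn.add_le_union g
      (s := s ∩ Iio r0) (t := s ∩ Ioo r0 r1)
      (fun x hx y hy => hx.2.le.trans hy.2.1.le)
    have hsub : (s ∩ Iio r0) ∪ (s ∩ Ioo r0 r1) ⊆ s ∩ Iio r1 := by
      rintro x (⟨hxs, hx⟩ | ⟨hxs, hx1, hx2⟩)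
      · exact ⟨hxs, hx.trans hr1.1⟩
      · exact ⟨hxs, hx2⟩
    have h3 : h r0 + eVariationOn g (s ∩ Ioo r0 r1) ≤ h r0 + ε :=
      (hsplit.trans (eVariationOn.mono g hsub)).trans
        ((le_iSup (fun r : Iio β => h r) ⟨r1, hr1.2⟩).trans hr0)
    rwa [ENNReal.add_le_add_iff_left (hfin r0)] at h3
  refine evar_le fun k u hu hus => ?_
  rcases eq_or_ne k 0 with rfl | hk
  · simp
  · obtain ⟨r1, hr11, hr12⟩ := exists_between (hus k).2.2
    have hmem : ∀ i, u (min i k) ∈ s ∩ Ioo r0 r1 := fun i =>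
      ⟨(hus _).1, (hus _).2.1, (hu (min_le_right i k)).trans_lt hr11⟩
    have hsum : ∑ i ∈ Finset.range k, edist (g (u (i+1))) (g (u i))
        = ∑ i ∈ Finset.range k, edist (g (u (min (i+1) k))) (g (u (min i k))) := by
      refine Finset.sum_congr rfl fun i hi => ?_
      simp only [Finset.mem_range] at hi
      rw [min_eq_left (by omega), min_eq_left (by omega)]
    rw [hsum]
    exact (eVariationOn.sum_le (f := g) (fun i j hij => hu (by omega)) hmem).trans
      (key r1 ⟨(hus k).2.1.trans hr11, hr12⟩)

lemma lim_of_small {Y : Type*} [PseudoEMetricSpace Y] [CompleteSpace Y] {g : ℝ → Y}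
    {F : Filter ℝ} [hne : F.NeBot]
    (h : ∀ ε : ℝ≥0∞, 0 < ε → ∃ S ∈ F, ∀ p ∈ S, ∀ q ∈ S, edist (g p) (g q) ≤ ε) :
    ∃ L, Tendsto g F (𝓝 L) := by
  have hc : Cauchy (map g F) := by
    refine EMetric.cauchy_iff.2 ⟨map_neBot.ne', fun ε hε => ?_⟩
    have hε2 : 0 < min (ε / 2) 1 := lt_min (ENNReal.half_pos hε.ne') zero_lt_one
    obtain ⟨S, hS, hS2⟩ := h _ hε2
    refine ⟨g '' S, image_mem_map hS, ?_⟩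
    rintro _ ⟨p, hp, rfl⟩ _ ⟨q, hq, rfl⟩
    refine (hS2 p hp q hq).trans_lt ?_
    rcases eq_or_ne ε ∞ with rfl | hεfin
    · exact (min_le_right _ _).trans_lt (by simp)
    · exact (min_le_left _ _).trans_lt (ENNReal.half_lt_self hε.ne' hεfin)
  obtain ⟨L, hL⟩ := CompleteSpace.complete hc
  exact ⟨L, hL⟩

lemma exists_right_lim {Y : Type*} [PseudoEMetricSpace Y] [CompleteSpace Y] {g : ℝ → Y}
    {s : Set ℝ} (hv : eVariationOn g s ≠ ∞) (t : ℝ) [hne : (𝓝[s ∩ Ioi t] t).NeBot] :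
    ∃ L, Tendsto g (𝓝[s ∩ Ioi t] t) (𝓝 L) := by
  refine lim_of_small fun ε hε => ?_
  obtain ⟨v, hv1, hv2⟩ := tail_right hv t hε
  refine ⟨(s ∩ Ioi t) ∩ Iio v,
    inter_mem self_mem_nhdsWithin (mem_nhdsWithin_of_mem_nhds (Iio_mem_nhds hv1)), ?_⟩
  intro p hp q hq
  have h1 : p ∈ s ∩ Ioo t v := ⟨hp.1.1, hp.1.2, hp.2⟩
  have h2 : q ∈ s ∩ Ioo t v := ⟨hq.1.1, hq.1.2, hq.2⟩
  exact (eVariationOn.edist_le g h1 h2).trans hv2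

lemma exists_left_lim {Y : Type*} [PseudoEMetricSpace Y] [CompleteSpace Y] {g : ℝ → Y}
    {s : Set ℝ} (hv : eVariationOn g s ≠ ∞) (t : ℝ) [hne : (𝓝[s ∩ Iio t] t).NeBot] :
    ∃ L, Tendsto g (𝓝[s ∩ Iio t] t) (𝓝 L) := by
  refine lim_of_small fun ε hε => ?_
  obtain ⟨w, hw1, hw2⟩ := tail_left hv t hε
  refine ⟨(s ∩ Iio t) ∩ Ioi w,
    inter_mem self_mem_nhdsWithin (mem_nhdsWithin_of_mem_nhds (Ioi_mem_nhds hw1)), ?_⟩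
  intro p hp q hq
  have h1 : p ∈ s ∩ Ioo w t := ⟨hp.1.1, hp.2, hp.1.2⟩
  have h2 : q ∈ s ∩ Ioo w t := ⟨hq.1.1, hq.2, hq.1.2⟩
  exact (eVariationOn.edist_le g h1 h2).trans hw2

lemma strict_reduce (f : ℝ → X) {s : Set ℝ} (k : ℕ) (u : ℕ → ℝ) (hu : Monotone u)
    (hus : ∀ i, u i ∈ s) :
    ∃ (m : ℕ) (v : ℕ → ℝ), (∀ i, i < m → v i < v (i+1)) ∧ (∀ i, i ≤ m → v i ∈ s) ∧
      v m = u k ∧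
      ∑ i ∈ Finset.range k, edist (f (u (i+1))) (f (u i))
        = ∑ i ∈ Finset.range m, edist (f (v (i+1))) (f (v i)) := by
  induction k with
  | zero => exact ⟨0, fun _ => u 0, by omega, fun i _ => hus 0, rfl, by simp⟩
  | succ k ih =>
    obtain ⟨m, v, hv1, hv2, hv3, hv4⟩ := ih
    rcases eq_or_lt_of_le (hu (Nat.le_succ k)) with heq | hlt
    · refine ⟨m, v, hv1, hv2, by rw [hv3, heq], ?_⟩
      rw [Finset.sum_range_succ, hv4, ← heq, edist_self, add_zero]
    · set v' : ℕ → ℝ := fun i => if i ≤ m then v i else u (k+1) with hv'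
      have hv'eq : ∀ i, i ≤ m → v' i = v i := fun i hi => by simp only [hv', if_pos hi]
      have hv'gt : ∀ i, ¬ (i ≤ m) → v' i = u (k+1) := fun i hi => by simp only [hv', if_neg hi]
      refine ⟨m + 1, v', ?_, ?_, ?_, ?_⟩
      · intro i hi
        rcases lt_or_eq_of_le (Nat.lt_succ_iff.1 hi) with h | h
        · rw [hv'eq i (by omega), hv'eq (i+1) (by omega)]
          exact hv1 i h
        · rw [h, hv'eq m le_rfl, hv'gt (m+1) (by omega), hv3]
          exact hlt
      · intro i hi
        by_cases h : i ≤ m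
        · rw [hv'eq i h]; exact hv2 i h
        · rw [hv'gt i h]; exact hus (k+1)
      · rw [hv'gt (m+1) (by omega)]
      · rw [Finset.sum_range_succ, Finset.sum_range_succ, hv4]
        congr 1
        · refine Finset.sum_congr rfl fun i hi => ?_
          simp only [Finset.mem_range] at hi
          rw [hv'eq i (by omega), hv'eq (i+1) (by omega)]
        · rw [hv'gt (m+1) (by omega), hv'eq m le_rfl, hv3]

lemma approx_var {F G : ℝ → X} {A B : Set ℝ} {β : ℝ}
    (hA : ∀ t ∈ A, t ≤ β)
    (hR : ∀ t ∈ A, t < β → ∀ ε : ℝ≥0∞, 0 < ε → ∀ v, t < v →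
      ∃ q ∈ B, t < q ∧ q < v ∧ edist (F t) (G q) ≤ ε)
    (hL : β ∈ A → ∀ ε : ℝ≥0∞, 0 < ε → ∀ w, w < β →
      ∃ q ∈ B, w < q ∧ q < β ∧ edist (F β) (G q) ≤ ε) :
    eVariationOn F A ≤ eVariationOn G B := by
  refine evar_le fun k u hu hus => ?_
  obtain ⟨m, v, hv1, hv2, hv3, hv4⟩ := strict_reduce F k u hu hus
  rw [hv4]
  rcases eq_or_ne m 0 with rfl | hm
  · simp
  have hvmono : ∀ i j, i ≤ j → j ≤ m → v i ≤ v j := by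
    intro i j hij hjm
    induction j, hij using Nat.le_induction with
    | base => exact le_rfl
    | succ j hij ih => exact (ih (by omega)).trans (hv1 j (by omega)).le
  refine ENNReal.le_of_forall_pos_le_add fun ε hε hfin => ?_
  set ε' : ℝ≥0∞ := (ε : ℝ≥0∞) / (2 * m) with hε'
  have hε'pos : 0 < ε' := ENNReal.div_pos (by exact_mod_cast hε.ne') (by
    simp only [Ne, ENNReal.mul_eq_top]
    push_neg
    constructor <;> intro h <;> simp_all)
  -- choose approximating points below the top
  have hch : ∀ i : ℕ, ∃ q : ℝ, i < m →
      q ∈ B ∧ v i < q ∧ q < v (i+1) ∧ edist (F (v i)) (G q) ≤ ε' := by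
    intro i
    by_cases hi : i < m
    · have hvim : v i ∈ A := hv2 i hi.le
      have hviβ : v i < β := (hv1 i hi).trans_le (hA _ (hv2 (i+1) hi))
      obtain ⟨q, hq1, hq2, hq3, hq4⟩ := hR (v i) hvim hviβ ε' hε'pos (v (i+1)) (hv1 i hi)
      exact ⟨q, fun _ => ⟨hq1, hq2, hq3, hq4⟩⟩
    · exact ⟨0, fun h => absurd h hi⟩
  choose q hq using hch
  -- choose the top point
  have htop : ∃ qm : ℝ, qm ∈ B ∧ q (m-1) < qm ∧ edist (F (v m)) (G qm) ≤ ε' := by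
    have hq1 := hq (m-1) (by omega)
    rcases lt_or_eq_of_le (hA (v m) (hv2 m le_rfl)) with hβ | hβ
    · obtain ⟨r, hr1, hr2, hr3, hr4⟩ := hR (v m) (hv2 m le_rfl) hβ ε' hε'pos (v m + 1) (by linarith)
      have : q (m-1) < v m := by
        have := hq1.2.2.1
        have h2 : m - 1 + 1 = m := by omega
        rwa [h2] at this
      exact ⟨r, hr1, this.trans hr2, hr4⟩
    · have hβA : β ∈ A := hβ ▸ hv2 m le_rfl
      have hqβ : q (m-1) < β := by
        have := hq1.2.2.1
        have h2 : m - 1 + 1 = m := by omega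
        rw [h2] at this
        exact this.trans_le hβ.le
      obtain ⟨r, hr1, hr2, hr3, hr4⟩ := hL hβA ε' hε'pos (q (m-1)) hqβ
      exact ⟨r, hr1, hr2, by rw [hβ]; exact hr4⟩
  obtain ⟨qm, hqm1, hqm2, hqm3⟩ := htop
  set Q : ℕ → ℝ := fun i => if i < m then q i else qm with hQ
  have hQlt : ∀ i, i < m → Q i = q i := fun i hi => by simp only [hQ, if_pos hi]
  have hQge : ∀ i, ¬ (i < m) → Q i = qm := fun i hi => by simp only [hQ, if_neg hi]
  have hQmono : Monotone Q := by
    refine monotone_nat_of_le_succ fun i => ?_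
    rcases lt_trichotomy (i+1) m with h | h | h
    · rw [hQlt i (by omega), hQlt (i+1) h]
      exact ((hq i (by omega)).2.2.1.trans (hq (i+1) h).2.1).le
    · rw [hQlt i (by omega), hQge (i+1) (by omega)]
      have : i = m - 1 := by omega
      rw [this]; exact hqm2.le
    · rw [hQge i (by omega), hQge (i+1) (by omega)]
  have hQB : ∀ i, Q i ∈ B := by
    intro i
    by_cases hi : i < m
    · rw [hQlt i hi]; exact (hq i hi).1
    · rw [hQge i hi]; exact hqm1
  have happrox : ∀ i, i ≤ m → edist (F (v i)) (G (Q i)) ≤ ε' := by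
    intro i hi
    rcases lt_or_eq_of_le hi with h | h
    · rw [hQlt i h]; exact (hq i h).2.2.2
    · rw [h, hQge m (by omega)]; exact hqm3
  calc ∑ i ∈ Finset.range m, edist (F (v (i+1))) (F (v i))
      ≤ ∑ i ∈ Finset.range m, (ε' + (edist (G (Q (i+1))) (G (Q i)) + ε')) := by
        refine Finset.sum_le_sum fun i hi => ?_
        simp only [Finset.mem_range] at hi
        calc edist (F (v (i+1))) (F (v i))
            ≤ edist (F (v (i+1))) (G (Q (i+1))) + edist (G (Q (i+1))) (F (v i)) :=
              edist_triangle _ _ _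
          _ ≤ edist (F (v (i+1))) (G (Q (i+1)))
              + (edist (G (Q (i+1))) (G (Q i)) + edist (G (Q i)) (F (v i))) :=
              add_le_add_right (edist_triangle _ _ _) _
          _ ≤ ε' + (edist (G (Q (i+1))) (G (Q i)) + ε') := by
              refine add_le_add (happrox (i+1) (by omega)) (add_le_add_right ?_ _)
              rw [edist_comm]
              exact happrox i (by omega)
    _ ≤ eVariationOn G B + ↑ε := by
        rw [Finset.sum_add_distrib, Finset.sum_add_distrib]
        simp only [Finset.sum_const, Finset.card_range]
        have hsum : ∑ i ∈ Finset.range m, edist (G (Q (i+1))) (G (Q i)) ≤ eVariationOn G B :=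
          eVariationOn.sum_le (f := G) (n := m) hQmono hQB
        have hε'sum : (m : ℕ) • ε' + (m : ℕ) • ε' ≤ (ε : ℝ≥0∞) := by
          rw [← add_nsmul, nsmul_eq_mul]
          have h1 : ((m + m : ℕ) : ℝ≥0∞) ≤ 2 * m := by push_cast; ring_nf; exact le_rfl
          refine le_trans (mul_le_mul_left h1 ε') ?_
          rw [hε']
          exact ENNReal.mul_div_le
        calc (m : ℕ) • ε' + (∑ i ∈ Finset.range m, edist (G (Q (i+1))) (G (Q i)) + (m : ℕ) • ε')
            = ∑ i ∈ Finset.range m, edist (G (Q (i+1))) (G (Q i)) + ((m : ℕ) • ε' + (m : ℕ) • ε') := by ring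
          _ ≤ eVariationOn G B + ↑ε := add_le_add hsum hε'sum


end VarHelpers

section Master

variable {α : Type*} [MeasurableSpace α] {N : Type*} [MetricSpace N]
  [MeasurableSpace N] [BorelSpace N] {μ : Measure α} {h : α → N} {hh : SM h}

lemma NLp.sm (F : NLp μ h hh 1) : StronglyMeasurable F.1 :=
  stronglyMeasurable_iff_measurable_separable.2 ⟨F.2.1.1, F.2.1.2⟩

lemma edist_eq_lintegral (F G : NLp μ h hh 1) :
    edist F G = ∫⁻ x, edist (F.1 x) (G.1 x) ∂μ := by
  rw [NLp.edist_def]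
  simp only [Dp]
  rw [eLpNorm_one_eq_lintegral_enorm]
  refine lintegral_congr fun x => ?_
  rw [edist_dist, Real.enorm_eq_ofReal dist_nonneg]

lemma measurable_edist_comp (F G : NLp μ h hh 1) :
    Measurable fun x => edist (F.1 x) (G.1 x) :=
  (continuous_edist.comp_stronglyMeasurable ((NLp.sm F).prodMk (NLp.sm G))).measurable

lemma measurable_comp_countable {T : ℝ → ℝ} (hT : Measurable T)
    (hc : (range T).Countable) {κ : ℝ → α → N} (hκ : ∀ r, Measurable (κ r)) :
    Measurable fun p : ℝ × α => κ (T p.1) p.2 := by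
  intro s hs
  have heq : (fun p : ℝ × α => κ (T p.1) p.2) ⁻¹' s
      = ⋃ r : range T, ((fun p : ℝ × α => T p.1) ⁻¹' {(r : ℝ)})
          ∩ (Prod.snd ⁻¹' (κ (r : ℝ) ⁻¹' s)) := by
    ext p
    simp only [mem_preimage, mem_iUnion, mem_inter_iff, mem_singleton_iff]
    constructor
    · intro hp
      exact ⟨⟨T p.1, mem_range_self _⟩, rfl, hp⟩
    · rintro ⟨r, hr1, hr2⟩
      rw [hr1]
      exact hr2
  rw [heq]
  haveI := hc.to_subtype
  exact MeasurableSet.iUnion fun r =>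
    ((hT.comp measurable_fst) (measurableSet_singleton _)).inter
      (measurable_snd (hκ _ hs))

lemma masterGen (c : ℝ → NLp μ h hh 1) (e' : ℕ → ℝ) :
    ∫⁻ x, eVariationOn (fun t => (c t).1 x) (range e') ∂μ = eVariationOn c (range e') := by
  obtain ⟨m, w, hwmono, hwmem, hQ1, hQ3, hQ2⟩ := lemA_data e'
  have hS := fun x => lemA_sums e' m w hwmono hwmem hQ1 hQ3 hQ2 (fun t => (c t).1 x)
  have hSc := lemA_sums e' m w hwmono hwmem hQ1 hQ3 hQ2 c
  have h1 : ∫⁻ x, eVariationOn (fun t => (c t).1 x) (range e') ∂μ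
      = ∫⁻ x, ⨆ n, ∑ i ∈ Finset.range (m n),
          edist ((c (w n (i+1))).1 x) ((c (w n i)).1 x) ∂μ :=
    lintegral_congr fun x => (hS x).2
  rw [h1, lintegral_iSup (fun n => Finset.measurable_sum _ fun i _ => measurable_edist_comp _ _)
    (fun n n' hnn' x => (hS x).1 hnn'), hSc.2]
  refine iSup_congr fun n => ?_
  rw [lintegral_finset_sum _ fun i _ => measurable_edist_comp _ _]
  exact Finset.sum_congr rfl fun i _ => (edist_eq_lintegral _ _).symm

end Master

/-- Any curve `c : [a,b] → L^1_h(M,N)` (`N` complete) which is càdlàg (right continuous with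
left limits on `[a,b)`, left-continuous at `b`) and of bounded variation with respect to
`D_1` admits a jointly Borel measurable, separably valued `cHat : [a,b] × M → N` such that:
(a) for every `t ∈ [a,b]`, `x ↦ cHat(t,x)` represents `c t`; (b) for `μ`-a.e. `x`, the
section `t ↦ cHat(t,x)` is càdlàg of bounded variation; (c) for all `a ≤ s < t ≤ b`,
`Var_{D_1}(c;(s,t)) = ∫_M Var_N(cHat(·,x);(s,t)) dμ(x)`. -/
theorem stmt12 {α : Type*} [MeasurableSpace α] {N : Type*} [MetricSpace N]
    [MeasurableSpace N] [BorelSpace N] [CompleteSpace N]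
    (μ : Measure α) (h : α → N) (hh : SM h) (a b : ℝ) (hab : a < b)
    (c : ℝ → NLp μ h hh 1)
    (hrc : ∀ t ∈ Set.Ico a b, Tendsto c (𝓝[Set.Ioc t b] t) (𝓝 (c t)))
    (hll : ∀ t ∈ Set.Ioc a b, ∃ L, Tendsto c (𝓝[Set.Ico a t] t) (𝓝 L))
    (hlb : Tendsto c (𝓝[Set.Ico a b] b) (𝓝 (c b)))
    (hbv : eVariationOn c (Set.Icc a b) ≠ ∞) :
    ∃ cHat : ℝ × α → N, Measurable cHat ∧ TopologicalSpace.IsSeparable (Set.range cHat) ∧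
      (∀ t ∈ Set.Icc a b, (fun x => cHat (t, x)) =ᵐ[μ] (c t).1) ∧
      (∀ᵐ x ∂μ,
        (∀ t ∈ Set.Ico a b,
          Tendsto (fun r => cHat (r, x)) (𝓝[Set.Ioc t b] t) (𝓝 (cHat (t, x)))) ∧
        (∀ t ∈ Set.Ioc a b, ∃ L, Tendsto (fun r => cHat (r, x)) (𝓝[Set.Ico a t] t) (𝓝 L)) ∧
        Tendsto (fun r => cHat (r, x)) (𝓝[Set.Ico a b] b) (𝓝 (cHat (b, x))) ∧
        eVariationOn (fun r => cHat (r, x)) (Set.Icc a b) ≠ ∞) ∧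
      (∀ s t : ℝ, a ≤ s → s < t → t ≤ b →
        eVariationOn c (Set.Ioo s t)
          = ∫⁻ x, eVariationOn (fun r => cHat (r, x)) (Set.Ioo s t) ∂μ) := by
  classical
  rcases isEmpty_or_nonempty N with hN | hN
  · -- degenerate case: `N` empty forces `α` empty
    have hae : IsEmpty α := ⟨fun x => (hN.false (h x)).elim⟩
    have hμ : μ = 0 := Measure.eq_zero_of_isEmpty μ
    have hint : ∀ g : α → ℝ≥0∞, ∫⁻ x, g x ∂μ = 0 := fun g => by
      rw [hμ]; exact lintegral_zero_measure g
    have hμae : ∀ p : α → Prop, ∀ᵐ x ∂μ, p x := fun p => by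
      have hbot : ae μ = ⊥ := ae_eq_bot.2 hμ
      rw [Filter.Eventually, hbot]
      exact Filter.mem_bot
    have hz : ∀ p q : ℝ, edist (c p) (c q) = 0 := by
      intro p q
      rw [edist_eq_lintegral]
      exact hint _
    have hvar0 : ∀ s : Set ℝ, eVariationOn c s = 0 := by
      intro s
      refine le_antisymm (evar_le fun k u hu hus => ?_) zero_le
      simp [hz]
    haveI : IsEmpty (ℝ × α) := ⟨fun p => hae.false p.2⟩
    refine ⟨fun p => hae.elim p.2, measurable_of_empty _, ?_, fun t _ => hμae _, hμae _, ?_⟩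
    · rw [Set.range_eq_empty]
      exact countable_empty.isSeparable
    · intro s t _ _ _
      rw [hvar0, hint]
  · -- main case
    set f : ℝ → α → N := fun t => (c t).1 with hf
    have hfm : ∀ t, Measurable (f t) := fun t => (c t).2.1.1
    have hfsep : ∀ t : ℝ, IsSeparable (range (f t)) := fun t => (c t).2.1.2
    have hedm : ∀ p q : ℝ, Measurable fun x => edist (f p x) (f q x) :=
      fun p q => measurable_edist_comp (c p) (c q)
    have hedist : ∀ p q : ℝ, edist (c p) (c q) = ∫⁻ x, edist (f p x) (f q x) ∂μ :=
      fun p q => edist_eq_lintegral (c p) (c q)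
    -- the countable dense parameter set
    set D : Set ℝ := (Icc a b ∩ range (fun q : ℚ => (q : ℝ))) ∪ {a, b} with hD
    have hDsub : D ⊆ Icc a b := by
      rintro x (hx | hx)
      · exact hx.1
      · rcases hx with rfl | rfl
        · exact ⟨le_rfl, hab.le⟩
        · exact ⟨hab.le, le_rfl⟩
    have hDcount : D.Countable :=
      ((countable_range _).mono inter_subset_right).union
        (((Set.finite_singleton b).insert a).countable)
    have haD : a ∈ D := Or.inr (Or.inl rfl)
    have hbD : b ∈ D := Or.inr (Or.inr rfl)
    have hDdense : ∀ t, a ≤ t → t < b → ∀ v, t < v →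
        ∃ q, q ∈ D ∧ t < q ∧ q < v ∧ q < b := by
      intro t hta htb v htv
      obtain ⟨q, hq1, hq2⟩ := exists_rat_btwn (lt_min htv htb)
      rw [lt_min_iff] at hq2
      exact ⟨q, Or.inl ⟨⟨hta.trans hq1.le, hq2.2.le⟩, mem_range_self q⟩, hq1, hq2.1, hq2.2⟩
    have hDdenseL : ∀ w, w < b → ∃ q, q ∈ D ∧ w < q ∧ q < b := by
      intro w hw
      obtain ⟨q, hq1, hq2⟩ := exists_rat_btwn (max_lt hw hab)
      exact ⟨q, Or.inl ⟨⟨(le_max_right w a).trans hq1.le, hq2.le⟩, mem_range_self q⟩,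
        (le_max_left w a).trans_lt hq1, hq2⟩
    obtain ⟨e, he⟩ := hDcount.exists_eq_range ⟨a, haD⟩
    -- pointwise variation along D
    set V : α → ℝ≥0∞ := fun x => eVariationOn (fun t => f t x) D with hV
    have hmaster : ∫⁻ x, V x ∂μ = eVariationOn c D := by
      simp only [hV, he]
      exact masterGen c e
    have hVmeas : Measurable V := by
      obtain ⟨m, w, hwmono, hwmem, hQ1, hQ3, hQ2⟩ := lemA_data e
      have hS := fun x : α => lemA_sums e m w hwmono hwmem hQ1 hQ3 hQ2 (fun t => f t x)
      have hVeq : V = fun x => ⨆ n, ∑ i ∈ Finset.range (m n),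
          edist (f (w n (i+1)) x) (f (w n i) x) := by
        funext x
        rw [hV]
        simp only [he]
        exact (hS x).2
      rw [hVeq]
      exact Measurable.iSup fun n => Finset.measurable_sum _ fun i _ => hedm _ _
    have hVfin : ∀ᵐ x ∂μ, V x < ∞ := by
      refine ae_lt_top hVmeas ?_
      rw [hmaster]
      exact ne_top_of_le_ne_top hbv (eVariationOn.mono c hDsub)
    set good : Set α := {x | V x ≠ ∞} with hgood
    have hgoodm : MeasurableSet good := (hVmeas (measurableSet_singleton ∞)).compl
    have hgoodae : ∀ᵐ x ∂μ, x ∈ good := hVfin.mono fun x hx => hx.ne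
    -- accumulation of D from the right and from the left at `b`
    have hneR : ∀ t, a ≤ t → t < b → (𝓝[D ∩ Ioi t] t).NeBot := by
      intro t hta htb
      rw [← mem_closure_iff_nhdsWithin_neBot, Metric.mem_closure_iff]
      intro ε hε
      obtain ⟨q, hq1, hq2, hq3, _⟩ := hDdense t hta htb (t + ε) (by linarith)
      refine ⟨q, ⟨hq1, hq2⟩, ?_⟩
      rw [Real.dist_eq, abs_of_nonpos (by linarith)]
      linarith
    have hneLb : (𝓝[D ∩ Iio b] b).NeBot := by
      rw [← mem_closure_iff_nhdsWithin_neBot, Metric.mem_closure_iff]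
      intro ε hε
      obtain ⟨q, hq1, hq2, hq3⟩ := hDdenseL (max (b - ε) a) (max_lt (by linarith) hab)
      rw [max_lt_iff] at hq2
      refine ⟨q, ⟨hq1, hq3⟩, ?_⟩
      rw [Real.dist_eq, abs_of_nonneg (by linarith)]
      linarith
    -- right limits along `D`, left limit at `b` along `D`
    set R : ℝ → α → N := fun t x => limUnder (𝓝[D ∩ Ioi t] t) (fun r => f r x) with hRdef
    set Lb : α → N := fun x => limUnder (𝓝[D ∩ Iio b] b) (fun r => f r x) with hLbdef
    have hlimR : ∀ x ∈ good, ∀ t, a ≤ t → t < b →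
        Tendsto (fun r => f r x) (𝓝[D ∩ Ioi t] t) (𝓝 (R t x)) := by
      intro x hx t hta htb
      haveI := hneR t hta htb
      exact tendsto_nhds_limUnder (exists_right_lim (g := fun r => f r x) (s := D) hx t)
    have hlimLb : ∀ x ∈ good, Tendsto (fun r => f r x) (𝓝[D ∩ Iio b] b) (𝓝 (Lb x)) := by
      intro x hx
      haveI := hneLb
      exact tendsto_nhds_limUnder (exists_left_lim (g := fun r => f r x) (s := D) hx b)
    -- the candidate function
    set cH : ℝ × α → N := fun p =>
      if p.2 ∈ good then (if p.1 < b then R (max p.1 a) p.2 else Lb p.2) else h p.2 with hcH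
    have hcHlt : ∀ x t, x ∈ good → t < b → cH (t, x) = R (max t a) x := fun x t hx ht => by
      simp only [hcH, if_pos hx, if_pos ht]
    have hcHmid : ∀ x t, x ∈ good → a ≤ t → t < b → cH (t, x) = R t x := fun x t hx hta htb => by
      rw [hcHlt x t hx htb, max_eq_left hta]
    have hcHge : ∀ x t, x ∈ good → b ≤ t → cH (t, x) = Lb x := fun x t hx ht => by
      simp only [hcH, if_pos hx, if_neg (not_lt.2 ht)]
    have hcHbad : ∀ x t, x ∉ good → cH (t, x) = h x := fun x t hx => by
      simp only [hcH, if_neg hx]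
    -- approximating sequences within `D`
    have hseqR : ∀ t', a ≤ t' → t' < b → ∃ q : ℕ → ℝ,
        (∀ n, q n ∈ D ∧ t' < q n ∧ q n < b) ∧
        Tendsto q atTop (𝓝[D ∩ Ioi t'] t') ∧ Tendsto q atTop (𝓝[Ioc t' b] t') := by
      intro t' ht1 ht2
      have hpos : ∀ n : ℕ, 0 < (b - t') / (n + 1) := fun n =>
        div_pos (by linarith) (by positivity)
      have hch : ∀ n : ℕ, ∃ q, q ∈ D ∧ t' < q ∧ q < t' + (b - t')/(n+1) ∧ q < b :=
        fun n => hDdense t' ht1 ht2 _ (by linarith [hpos n])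
      choose q hq1 hq2 hq3 hq4 using hch
      have hq0 : Tendsto (fun n : ℕ => t' + (b - t')/(n+1)) atTop (𝓝 t') := by
        have h2 : Tendsto (fun n : ℕ => (b - t')/(n+1)) atTop (𝓝 0) := by
          have h3 : Tendsto (fun n : ℕ => 1/((n : ℝ)+1)) atTop (𝓝 0) :=
            tendsto_one_div_add_atTop_nhds_zero_nat
          have h4 := h3.const_mul (b - t')
          rw [mul_zero] at h4
          refine h4.congr fun n => ?_
          rw [mul_one_div]
        simpa using tendsto_const_nhds.add h2
      have hqt : Tendsto q atTop (𝓝 t') :=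
        tendsto_of_tendsto_of_tendsto_of_le_of_le tendsto_const_nhds hq0
          (fun n => (hq2 n).le) (fun n => (hq3 n).le)
      refine ⟨q, fun n => ⟨hq1 n, hq2 n, hq4 n⟩, ?_, ?_⟩
      · rw [tendsto_nhdsWithin_iff]
        exact ⟨hqt, Eventually.of_forall fun n => ⟨hq1 n, hq2 n⟩⟩
      · rw [tendsto_nhdsWithin_iff]
        exact ⟨hqt, Eventually.of_forall fun n => ⟨hq2 n, (hq4 n).le⟩⟩
    have hseqL : ∃ q : ℕ → ℝ, (∀ n, q n ∈ D ∧ a ≤ q n ∧ q n < b) ∧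
        Tendsto q atTop (𝓝[D ∩ Iio b] b) ∧ Tendsto q atTop (𝓝[Ico a b] b) := by
      have hch : ∀ n : ℕ, ∃ q, q ∈ D ∧ max (b - (b - a)/(n+1)) a < q ∧ q < b := by
        intro n
        refine hDdenseL _ (max_lt ?_ hab)
        have : 0 < (b - a)/(n+1) := div_pos (by linarith) (by positivity)
        linarith
      choose q hq1 hq2 hq3 using hch
      have hq0 : Tendsto (fun n : ℕ => max (b - (b - a)/(n+1)) a) atTop (𝓝 b) := by
        have h2 : Tendsto (fun n : ℕ => (b - a)/(n+1)) atTop (𝓝 0) := by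
          have h3 : Tendsto (fun n : ℕ => 1/((n : ℝ)+1)) atTop (𝓝 0) :=
            tendsto_one_div_add_atTop_nhds_zero_nat
          have h4 := h3.const_mul (b - a)
          rw [mul_zero] at h4
          refine h4.congr fun n => ?_
          rw [mul_one_div]
        have h4 : Tendsto (fun n : ℕ => b - (b - a)/(n+1)) atTop (𝓝 b) := by
          simpa using tendsto_const_nhds.sub h2
        have h5 := h4.max (tendsto_const_nhds (x := a))
        rwa [max_eq_left hab.le] at h5
      have hqb : Tendsto q atTop (𝓝 b) :=
        tendsto_of_tendsto_of_tendsto_of_le_of_le hq0 tendsto_const_nhds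
          (fun n => (hq2 n).le) (fun n => (hq3 n).le)
      refine ⟨q, fun n => ⟨hq1 n, (hDsub (hq1 n)).1, hq3 n⟩, ?_, ?_⟩
      · rw [tendsto_nhdsWithin_iff]
        exact ⟨hqb, Eventually.of_forall fun n => ⟨hq1 n, hq3 n⟩⟩
      · rw [tendsto_nhdsWithin_iff]
        exact ⟨hqb, Eventually.of_forall fun n => ⟨(hDsub (hq1 n)).1, hq3 n⟩⟩
    -- value approximation by `f` at points of `D`
    have hKq : ∀ x ∈ good, ∀ t, a ≤ t → t < b → ∀ ε : ℝ≥0∞, 0 < ε → ∀ v, t < v →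
        ∃ q, q ∈ D ∧ t < q ∧ q < v ∧ edist (cH (t, x)) (f q x) ≤ ε := by
      intro x hx t hta htb ε hε v htv
      haveI := hneR t hta htb
      have hev1 : ∀ᶠ q in 𝓝[D ∩ Ioi t] t, edist (f q x) (R t x) < ε :=
        EMetric.tendsto_nhds.1 (hlimR x hx t hta htb) ε hε
      have hev2 : ∀ᶠ q in 𝓝[D ∩ Ioi t] t, q < v :=
        eventually_nhdsWithin_of_eventually_nhds (Iio_mem_nhds htv)
      obtain ⟨q, ⟨h1, h2⟩, h3⟩ := ((hev1.and hev2).and eventually_mem_nhdsWithin).exists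
      refine ⟨q, h3.1, h3.2, h2, ?_⟩
      rw [hcHmid x t hx hta htb, edist_comm]
      exact h1.le
    have hKqb : ∀ x ∈ good, ∀ ε : ℝ≥0∞, 0 < ε → ∀ w', w' < b →
        ∃ q, q ∈ D ∧ w' < q ∧ q < b ∧ edist (cH (b, x)) (f q x) ≤ ε := by
      intro x hx ε hε w' hw'
      haveI := hneLb
      have hev1 : ∀ᶠ q in 𝓝[D ∩ Iio b] b, edist (f q x) (Lb x) < ε :=
        EMetric.tendsto_nhds.1 (hlimLb x hx) ε hε
      have hev2 : ∀ᶠ q in 𝓝[D ∩ Iio b] b, w' < q :=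
        eventually_nhdsWithin_of_eventually_nhds (Ioi_mem_nhds hw')
      obtain ⟨q, ⟨h1, h2⟩, h3⟩ := ((hev1.and hev2).and eventually_mem_nhdsWithin).exists
      refine ⟨q, h3.1, h2, h3.2, ?_⟩
      rw [hcHge x b hx le_rfl, edist_comm]
      exact h1.le
    -- uniform tail bounds, right-continuity, left limit at b
    have hrcH : ∀ x, ∀ t ∈ Ico a b,
        Tendsto (fun r => cH (r, x)) (𝓝[Ioc t b] t) (𝓝 (cH (t, x))) := by
      intro x t ht
      obtain ⟨hta, htb⟩ := ht
      by_cases hx : x ∈ good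
      swap
      · have hconst : (fun r => cH (r, x)) = fun _ => h x := funext fun r => hcHbad x r hx
        rw [hconst, hcHbad x t hx]
        exact tendsto_const_nhds
      rw [EMetric.tendsto_nhds]
      intro ε hε
      set ε' : ℝ≥0∞ := min (ε / 2) 1 with hε'def
      have hε'pos : 0 < ε' := lt_min (ENNReal.half_pos hε.ne') zero_lt_one
      have hε'lt : ε' < ε := by
        rcases eq_or_ne ε ∞ with rfl | hfin
        · exact (min_le_right _ _).trans_lt (by simp)
        · exact (min_le_left _ _).trans_lt (ENNReal.half_lt_self hε.ne' hfin)
      obtain ⟨v0, hv0t, hv0⟩ := tail_right (g := fun r => f r x) (s := D) hx t hε'pos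
      have hclaim : ∀ q ∈ D ∩ Ioo t v0, edist (cH (t, x)) (f q x) ≤ ε' := by
        intro q hq
        rw [hcHmid x t hx hta htb]
        haveI := hneR t hta htb
        refine le_of_tendsto ((hlimR x hx t hta htb).edist tendsto_const_nhds) ?_
        have hev2 : ∀ᶠ q' in 𝓝[D ∩ Ioi t] t, q' < v0 :=
          eventually_nhdsWithin_of_eventually_nhds (Iio_mem_nhds hv0t)
        filter_upwards [hev2, eventually_mem_nhdsWithin] with q' h2 h3
        have hq'mem : q' ∈ D ∩ Ioo t v0 := ⟨h3.1, h3.2, h2⟩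
        exact (eVariationOn.edist_le (fun r => f r x) hq'mem hq).trans hv0
      have hclaim2 : ∀ r, t < r → r < v0 → r ≤ b → edist (cH (t, x)) (cH (r, x)) ≤ ε' := by
        intro r htr hrv hrb
        rcases eq_or_lt_of_le hrb with rfl | hrb'
        · rw [hcHge x r hx le_rfl]
          haveI := hneLb
          refine le_of_tendsto (tendsto_const_nhds.edist (hlimLb x hx)) ?_
          have hev2 : ∀ᶠ q' in 𝓝[D ∩ Iio r] r, t < q' :=
            eventually_nhdsWithin_of_eventually_nhds (Ioi_mem_nhds htr)
          filter_upwards [hev2, eventually_mem_nhdsWithin] with q' h2 h3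
          exact hclaim q' ⟨h3.1, h2, h3.2.trans hrv⟩
        · rw [hcHmid x r hx (hta.trans htr.le) hrb']
          haveI := hneR r (hta.trans htr.le) hrb'
          refine le_of_tendsto (tendsto_const_nhds.edist (hlimR x hx r (hta.trans htr.le) hrb')) ?_
          have hev2 : ∀ᶠ q' in 𝓝[D ∩ Ioi r] r, q' < v0 :=
            eventually_nhdsWithin_of_eventually_nhds (Iio_mem_nhds hrv)
          filter_upwards [hev2, eventually_mem_nhdsWithin] with q' h2 h3
          exact hclaim q' ⟨h3.1, htr.trans h3.2, h2⟩
      have hev3 : ∀ᶠ r in 𝓝[Ioc t b] t, r < v0 :=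
        eventually_nhdsWithin_of_eventually_nhds (Iio_mem_nhds hv0t)
      filter_upwards [hev3, eventually_mem_nhdsWithin] with r h2 h3
      rw [edist_comm]
      exact (hclaim2 r h3.1 h2 h3.2).trans_lt hε'lt
    have hlcH : ∀ x, Tendsto (fun r => cH (r, x)) (𝓝[Ico a b] b) (𝓝 (cH (b, x))) := by
      intro x
      by_cases hx : x ∈ good
      swap
      · have hconst : (fun r => cH (r, x)) = fun _ => h x := funext fun r => hcHbad x r hx
        rw [hconst, hcHbad x b hx]
        exact tendsto_const_nhds
      rw [EMetric.tendsto_nhds]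
      intro ε hε
      set ε' : ℝ≥0∞ := min (ε / 2) 1 with hε'def
      have hε'pos : 0 < ε' := lt_min (ENNReal.half_pos hε.ne') zero_lt_one
      have hε'lt : ε' < ε := by
        rcases eq_or_ne ε ∞ with rfl | hfin
        · exact (min_le_right _ _).trans_lt (by simp)
        · exact (min_le_left _ _).trans_lt (ENNReal.half_lt_self hε.ne' hfin)
      obtain ⟨w0, hw0b, hw0⟩ := tail_left (g := fun r => f r x) (s := D) hx b hε'pos
      have hclaim : ∀ q ∈ D ∩ Ioo w0 b, edist (cH (b, x)) (f q x) ≤ ε' := by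
        intro q hq
        rw [hcHge x b hx le_rfl]
        haveI := hneLb
        refine le_of_tendsto ((hlimLb x hx).edist tendsto_const_nhds) ?_
        have hev2 : ∀ᶠ q' in 𝓝[D ∩ Iio b] b, w0 < q' :=
          eventually_nhdsWithin_of_eventually_nhds (Ioi_mem_nhds hw0b)
        filter_upwards [hev2, eventually_mem_nhdsWithin] with q' h2 h3
        have hq'mem : q' ∈ D ∩ Ioo w0 b := ⟨h3.1, h2, h3.2⟩
        exact (eVariationOn.edist_le (fun r => f r x) hq'mem hq).trans hw0
      have hclaim2 : ∀ r, max w0 a ≤ r → r < b → edist (cH (b, x)) (cH (r, x)) ≤ ε' := by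
        intro r hwr hrb
        have hra : a ≤ r := (le_max_right w0 a).trans hwr
        rw [hcHmid x r hx hra hrb]
        haveI := hneR r hra hrb
        refine le_of_tendsto (tendsto_const_nhds.edist (hlimR x hx r hra hrb)) ?_
        have hev2 : ∀ᶠ q' in 𝓝[D ∩ Ioi r] r, q' < b :=
          eventually_nhdsWithin_of_eventually_nhds (Iio_mem_nhds hrb)
        filter_upwards [hev2, eventually_mem_nhdsWithin] with q' h2 h3
        exact hclaim q' ⟨h3.1, ((le_max_left w0 a).trans hwr).trans_lt h3.2, h2⟩
      have hev3 : ∀ᶠ r in 𝓝[Ico a b] b, max w0 a < r :=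
        eventually_nhdsWithin_of_eventually_nhds (Ioi_mem_nhds (max_lt hw0b hab))
      filter_upwards [hev3, eventually_mem_nhdsWithin] with r h2 h3
      rw [edist_comm]
      exact (hclaim2 r h2.le h3.2).trans_lt hε'lt
    -- variation bound for sections
    have hvarH : ∀ x ∈ good, eVariationOn (fun r => cH (r, x)) (Icc a b) ≤ V x := by
      intro x hx
      refine approx_var (β := b) (fun r hr => hr.2) ?_ ?_
      · intro r hr hrb ε hε v hrv
        obtain ⟨q, hq1, hq2, hq3, hq4⟩ := hKq x hx r hr.1 hrb ε hε v hrv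
        exact ⟨q, hq1, hq2, hq3, hq4⟩
      · intro _ ε hε w' hw'
        obtain ⟨q, hq1, hq2, hq3, hq4⟩ := hKqb x hx ε hε w' hw'
        exact ⟨q, hq1, hq2, hq3, hq4⟩
    -- measurability of slices
    have hMslice : ∀ t : ℝ, Measurable fun x => cH (t, x) := by
      intro t
      rcases lt_or_ge t b with htb | hbt
      · set t' := max t a with ht'def
        have ht'1 : a ≤ t' := le_max_right _ _
        have ht'2 : t' < b := max_lt htb hab
        obtain ⟨q, hqmem, hqD, _⟩ := hseqR t' ht'1 ht'2
        have hgn : ∀ n : ℕ, Measurable fun x => if x ∈ good then f (q n) x else h x :=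
          fun n => Measurable.ite hgoodm (hfm _) hh.1
        have hcHt : (fun x => cH (t, x)) = fun x => if x ∈ good then R t' x else h x := by
          funext x
          by_cases hx : x ∈ good
          · rw [if_pos hx, hcHlt x t hx htb]
          · rw [if_neg hx, hcHbad x t hx]
        rw [hcHt]
        refine measurable_of_tendsto_metrizable hgn (tendsto_pi_nhds.2 fun x => ?_)
        by_cases hx : x ∈ good
        · simp only [if_pos hx]
          exact (hlimR x hx t' ht'1 ht'2).comp hqD
        · simp only [if_neg hx]
          exact tendsto_const_nhds
      · obtain ⟨q, hqmem, hqD, _⟩ := hseqL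
        have hgn : ∀ n : ℕ, Measurable fun x => if x ∈ good then f (q n) x else h x :=
          fun n => Measurable.ite hgoodm (hfm _) hh.1
        have hcHt : (fun x => cH (t, x)) = fun x => if x ∈ good then Lb x else h x := by
          funext x
          by_cases hx : x ∈ good
          · rw [if_pos hx, hcHge x t hx hbt]
          · rw [if_neg hx, hcHbad x t hx]
        rw [hcHt]
        refine measurable_of_tendsto_metrizable hgn (tendsto_pi_nhds.2 fun x => ?_)
        by_cases hx : x ∈ good
        · simp only [if_pos hx]
          exact (hlimLb x hx).comp hqD
        · simp only [if_neg hx]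
          exact tendsto_const_nhds
    -- separable range
    have hSEP : ∃ S : Set N, IsSeparable S ∧ ∀ p, cH p ∈ S := by
      refine ⟨closure (range h ∪ ⋃ n, range (f (e n))),
        (hh.2.union (IsSeparable.iUnion fun n => hfsep (e n))).closure, ?_⟩
      rintro ⟨t, x⟩
      have hmemD : ∀ q ∈ D, ∀ y : α, f q y ∈ range h ∪ ⋃ n, range (f (e n)) := by
        intro q hq y
        have hqe : q ∈ range e := he ▸ hq
        obtain ⟨n, rfl⟩ := hqe
        exact Or.inr (mem_iUnion.2 ⟨n, mem_range_self y⟩)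
      by_cases hx : x ∈ good
      · by_cases htb : t < b
        · rw [hcHlt x t hx htb]
          haveI := hneR (max t a) (le_max_right t a) (max_lt htb hab)
          refine mem_closure_of_tendsto (hlimR x hx (max t a) (le_max_right t a)
            (max_lt htb hab)) ?_
          exact eventually_mem_nhdsWithin.mono fun q hq => hmemD q hq.1 x
        · rw [hcHge x t hx (not_lt.1 htb)]
          haveI := hneLb
          refine mem_closure_of_tendsto (hlimLb x hx) ?_
          exact eventually_mem_nhdsWithin.mono fun q hq => hmemD q hq.1 x
      · rw [hcHbad x t hx]
        exact subset_closure (Or.inl (mem_range_self x))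
    -- (a): representatives
    have ha : ∀ t ∈ Icc a b, (fun x => cH (t, x)) =ᵐ[μ] f t := by
      obtain ⟨S, hS1, hS2⟩ := hSEP
      have hsm : ∀ t : ℝ, StronglyMeasurable fun x => cH (t, x) := by
        intro t
        refine stronglyMeasurable_iff_measurable_separable.2 ⟨hMslice t, ?_⟩
        exact hS1.mono (range_subset_iff.2 fun x => hS2 (t, x))
      have hedmH : ∀ t : ℝ, Measurable fun x => edist (cH (t, x)) (f t x) := fun t =>
        (continuous_edist.comp_stronglyMeasurable ((hsm t).prodMk (NLp.sm (c t)))).measurable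
      intro t ht
      have hkey : ∀ (q : ℕ → ℝ), Tendsto (fun n => c (q n)) atTop (𝓝 (c t)) →
          (∀ x ∈ good, Tendsto (fun n => f (q n) x) atTop (𝓝 (cH (t, x)))) →
          (fun x => cH (t, x)) =ᵐ[μ] f t := by
        intro q hq1 hq2
        have h1 : Tendsto (fun n => edist (c (q n)) (c t)) atTop (𝓝 0) := by
          have hd : Tendsto (fun n => dist (c (q n)) (c t)) atTop (𝓝 0) :=
            tendsto_iff_dist_tendsto_zero.1 hq1
          have h3 := ENNReal.tendsto_ofReal hd
          rw [ENNReal.ofReal_zero] at h3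
          refine h3.congr fun n => ?_
          rw [edist_dist]
        have hint : ∫⁻ x, edist (cH (t, x)) (f t x) ∂μ = 0 := by
          have hle : ∫⁻ x, edist (cH (t, x)) (f t x) ∂μ
              ≤ liminf (fun n => ∫⁻ x, edist (f (q n) x) (f t x) ∂μ) atTop := by
            refine le_trans (le_of_eq (lintegral_congr_ae ?_))
              (lintegral_liminf_le fun n => hedm _ _)
            refine hgoodae.mono fun x hx => ?_
            have h4 : Tendsto (fun n => edist (f (q n) x) (f t x)) atTop
                (𝓝 (edist (cH (t, x)) (f t x))) := (hq2 x hx).edist tendsto_const_nhds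
            exact h4.liminf_eq.symm
          have heq2 : (fun n => ∫⁻ x, edist (f (q n) x) (f t x) ∂μ)
              = fun n => edist (c (q n)) (c t) := funext fun n => (hedist _ _).symm
          rw [heq2, h1.liminf_eq] at hle
          exact le_antisymm hle zero_le
        have h5 := (lintegral_eq_zero_iff (hedmH t)).1 hint
        refine h5.mono fun x hx => ?_
        exact edist_eq_zero.1 hx
      rcases lt_or_ge t b with htb | hbt
      · obtain ⟨q, hqmem, hqD, hqI⟩ := hseqR t ht.1 htb
        refine hkey q ((hrc t ⟨ht.1, htb⟩).comp hqI) fun x hx => ?_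
        rw [hcHmid x t hx ht.1 htb]
        exact (hlimR x hx t ht.1 htb).comp hqD
      · have hteq : t = b := le_antisymm ht.2 hbt
        subst hteq
        obtain ⟨q, hqmem, hqD, hqI⟩ := hseqL
        refine hkey q (hlb.comp hqI) fun x hx => ?_
        rw [hcHge x t hx le_rfl]
        exact (hlimLb x hx).comp hqD
    -- joint measurability
    have hjm : Measurable cH := by
      set T : ℕ → ℝ → ℝ := fun n t =>
        if b ≤ t then b else a + ((⌊(t - a) * 2^n / (b - a)⌋ : ℝ) + 1) * ((b - a) / 2^n)
        with hTdef
      have hTm : ∀ n, Measurable (T n) := by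
        intro n
        refine Measurable.ite (measurableSet_le measurable_const measurable_id)
          measurable_const ?_
        have h1 : Measurable fun t : ℝ => (t - a) * 2^n / (b - a) :=
          ((measurable_id.sub_const a).mul_const _).div_const _
        have h2 : Measurable fun t : ℝ => (⌊(t - a) * 2^n / (b - a)⌋ : ℤ) :=
          Int.measurable_floor.comp h1
        have h3 : Measurable fun z : ℤ => a + ((z : ℝ) + 1) * ((b - a) / 2^n) :=
          fun _ _ => trivial
        exact h3.comp h2
      have hTc : ∀ n, (range (T n)).Countable := by
        intro n
        refine Countable.mono ?_ ((countable_singleton b).union (countable_range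
          (fun z : ℤ => a + ((z : ℝ) + 1) * ((b - a) / 2^n))))
        rintro y ⟨t, rfl⟩
        by_cases hbt : b ≤ t
        · exact Or.inl (by simp [hTdef, if_pos hbt])
        · refine Or.inr ⟨⌊(t - a) * 2^n / (b - a)⌋, ?_⟩
          simp [hTdef, if_neg hbt]
      have hTprop : ∀ n t, t < b → t < T n t ∧ T n t ≤ t + (b - a)/2^n ∧ T n t ≤ b := by
        intro n t htb
        have hba : (0:ℝ) < b - a := by linarith
        have h2n : (0:ℝ) < 2^n := by positivity
        have hδ : (0:ℝ) < (b - a)/2^n := div_pos hba h2n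
        set z : ℝ := (t - a) * 2^n / (b - a) with hz
        have hzδ : z * ((b - a)/2^n) = t - a := by
          rw [hz]
          field_simp
        have hfl : (⌊z⌋ : ℝ) ≤ z := Int.floor_le z
        have hfl2 : z < (⌊z⌋ : ℝ) + 1 := Int.lt_floor_add_one z
        have hTeq : T n t = a + ((⌊z⌋ : ℝ) + 1) * ((b - a)/2^n) := by
          rw [hTdef]
          simp only [if_neg (not_le.2 htb)]
          rfl
        refine ⟨?_, ?_, ?_⟩
        · rw [hTeq]
          nlinarith [mul_lt_mul_of_pos_right hfl2 hδ]
        · rw [hTeq]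
          nlinarith [mul_le_mul_of_nonneg_right hfl hδ.le]
        · rw [hTeq]
          have hz2 : z < 2^n := by
            rw [hz, div_lt_iff₀ hba]
            nlinarith
          have h4 : ⌊z⌋ < (2^n : ℤ) := by
            rw [Int.floor_lt]
            push_cast
            exact hz2
          have hz3 : (⌊z⌋ : ℝ) + 1 ≤ 2^n := by exact_mod_cast h4
          have h5 : ((⌊z⌋ : ℝ) + 1) * ((b - a)/2^n) ≤ 2^n * ((b - a)/2^n) :=
            mul_le_mul_of_nonneg_right hz3 hδ.le
          have h6 : (2:ℝ)^n * ((b - a)/2^n) = b - a := by field_simp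
          linarith
      have hδ0 : Tendsto (fun n : ℕ => (b - a)/2^n) atTop (𝓝 0) := by
        have h3 : Tendsto (fun n : ℕ => ((1:ℝ)/2)^n) atTop (𝓝 0) :=
          tendsto_pow_atTop_nhds_zero_of_lt_one (by norm_num) (by norm_num)
        have h4 := h3.const_mul (b - a)
        rw [mul_zero] at h4
        refine h4.congr fun n => ?_
        rw [div_pow, one_pow, ← mul_div_assoc, mul_one]
      have hTconv : ∀ t x, Tendsto (fun n => cH (T n t, x)) atTop (𝓝 (cH (t, x))) := by
        intro t x
        by_cases hbt : b ≤ t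
        · have hTb : ∀ n, T n t = b := fun n => by rw [hTdef]; simp only [if_pos hbt]
          have he2 : cH (b, x) = cH (t, x) := by
            by_cases hx : x ∈ good
            · rw [hcHge x t hx hbt, hcHge x b hx le_rfl]
            · rw [hcHbad x t hx, hcHbad x b hx]
          have heq3 : (fun n => cH (T n t, x)) = fun _ => cH (b, x) :=
            funext fun n => by rw [hTb n]
          rw [heq3, he2]
          exact tendsto_const_nhds
        · push_neg at hbt
          rcases lt_or_ge t a with hta | hta
          · have hev : ∀ᶠ n in atTop, T n t < a := by
              have h5 := hδ0.eventually_lt_const (by linarith : (0:ℝ) < a - t)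
              refine h5.mono fun n hn => ?_
              have := (hTprop n t hbt).2.1
              linarith
            refine Tendsto.congr' ?_ tendsto_const_nhds
            refine hev.mono fun n hn => ?_
            show cH (t, x) = cH (T n t, x)
            by_cases hx : x ∈ good
            · rw [hcHlt x t hx hbt, hcHlt x (T n t) hx (hn.trans hab),
                max_eq_right hta.le, max_eq_right hn.le]
            · rw [hcHbad x t hx, hcHbad x (T n t) hx]
          · have hTt : Tendsto (fun n => T n t) atTop (𝓝[Ioc t b] t) := by
              rw [tendsto_nhdsWithin_iff]
              constructor
              · have hub : Tendsto (fun n : ℕ => t + (b - a)/2^n) atTop (𝓝 t) := by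
                  simpa using tendsto_const_nhds.add hδ0
                exact tendsto_of_tendsto_of_tendsto_of_le_of_le tendsto_const_nhds hub
                  (fun n => (hTprop n t hbt).1.le) (fun n => (hTprop n t hbt).2.1)
              · exact Eventually.of_forall fun n => ⟨(hTprop n t hbt).1, (hTprop n t hbt).2.2⟩
            exact (hrcH x t ⟨hta, hbt⟩).comp hTt
      have hmn : ∀ n, Measurable fun p : ℝ × α => cH (T n p.1, p.2) := fun n =>
        measurable_comp_countable (hTm n) (hTc n) fun r => hMslice r
      exact measurable_of_tendsto_metrizable hmn (tendsto_pi_nhds.2 fun p => hTconv p.1 p.2)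
    -- (c)
    have hc : ∀ s t : ℝ, a ≤ s → s < t → t ≤ b →
        eVariationOn c (Ioo s t) = ∫⁻ x, eVariationOn (fun r => cH (r, x)) (Ioo s t) ∂μ := by
      intro s t hs hst htb
      have hBne : (D ∩ Ioo s t).Nonempty := by
        obtain ⟨q, hq1, hq2, hq3, _⟩ := hDdense s hs (hst.trans_le htb) t hst
        exact ⟨q, hq1, hq2, hq3⟩
      obtain ⟨e', he'⟩ := (hDcount.mono inter_subset_left).exists_eq_range hBne
      have hstep1 : eVariationOn c (Ioo s t) = eVariationOn c (D ∩ Ioo s t) := by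
        refine le_antisymm ?_ (eVariationOn.mono c inter_subset_right)
        refine approx_var (β := t) (fun r hr => hr.2.le) ?_
          (fun hβ => absurd hβ.2 (lt_irrefl t))
        intro r hr hrt ε hε v hrv
        have hrIco : r ∈ Ico a b := ⟨hs.trans hr.1.le, hrt.trans_le htb⟩
        have hball : ∀ᶠ y in 𝓝[Ioc r b] r, edist (c y) (c r) < ε := by
          have h1 := (hrc r hrIco).eventually (EMetric.ball_mem_nhds (c r) hε)
          exact h1
        rw [eventually_nhdsWithin_iff, Metric.eventually_nhds_iff] at hball
        obtain ⟨δ, hδpos, hδball⟩ := hball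
        obtain ⟨q, hq1, hq2, hq3, _⟩ := hDdense r (hs.trans hr.1.le) (hrt.trans_le htb)
          (min v (min (r + δ) t)) (lt_min hrv (lt_min (by linarith) hrt))
        rw [lt_min_iff, lt_min_iff] at hq3
        refine ⟨q, ⟨hq1, hr.1.trans hq2, hq3.2.2⟩, hq2, hq3.1, ?_⟩
        have hqd : dist q r < δ := by
          rw [Real.dist_eq, abs_of_nonneg (by linarith)]
          linarith [hq3.2.1]
        have hqIoc : q ∈ Ioc r b := ⟨hq2, (hq3.2.2.trans_le htb).le⟩
        have := hδball hqd hqIoc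
        rw [edist_comm]
        exact this.le
      have haeD : ∀ᵐ x ∂μ, ∀ q ∈ D, cH (q, x) = f q x := by
        rw [ae_ball_iff hDcount]
        intro q hq
        exact ha q (hDsub hq)
      have hstep2 : ∀ᵐ x ∂μ, eVariationOn (fun r => cH (r, x)) (Ioo s t)
          = eVariationOn (fun r => f r x) (D ∩ Ioo s t) := by
        filter_upwards [hgoodae, haeD] with x hx hxD
        refine le_antisymm ?_ ?_
        · refine approx_var (β := t) (fun r hr => hr.2.le) ?_
            (fun hβ => absurd hβ.2 (lt_irrefl t))
          intro r hr hrt ε hε v hrv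
          obtain ⟨q, hq1, hq2, hq3, hq4⟩ := hKq x hx r (hs.trans hr.1.le)
            (hrt.trans_le htb) ε hε (min v t) (lt_min hrv hrt)
          rw [lt_min_iff] at hq3
          exact ⟨q, ⟨hq1, hr.1.trans hq2, hq3.2⟩, hq2, hq3.1, hq4⟩
        · have hEq : eVariationOn (fun r => f r x) (D ∩ Ioo s t)
              = eVariationOn (fun r => cH (r, x)) (D ∩ Ioo s t) :=
            eVariationOn.eq_of_eqOn fun r hr => (hxD r hr.1).symm
          rw [hEq]
          exact eVariationOn.mono _ inter_subset_right
      calc eVariationOn c (Ioo s t) = eVariationOn c (D ∩ Ioo s t) := hstep1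
        _ = ∫⁻ x, eVariationOn (fun r => f r x) (D ∩ Ioo s t) ∂μ := by
            rw [he']
            exact (masterGen c e').symm
        _ = ∫⁻ x, eVariationOn (fun r => cH (r, x)) (Ioo s t) ∂μ :=
            (lintegral_congr_ae hstep2).symm
    -- left limits of sections
    have hllH : ∀ x ∈ good, ∀ t ∈ Ioc a b,
        ∃ L, Tendsto (fun r => cH (r, x)) (𝓝[Ico a t] t) (𝓝 L) := by
      intro x hx t ht
      have hvar : eVariationOn (fun r => cH (r, x)) (Icc a b) ≠ ∞ :=
        ne_top_of_le_ne_top hx (hvarH x hx)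
      have hset : Icc a b ∩ Iio t = Ico a t := by
        ext r
        constructor
        · rintro ⟨⟨h1, _⟩, h3⟩
          exact ⟨h1, h3⟩
        · rintro ⟨h1, h3⟩
          exact ⟨⟨h1, h3.le.trans ht.2⟩, h3⟩
      haveI : (𝓝[Icc a b ∩ Iio t] t).NeBot := by
        rw [hset, ← mem_closure_iff_nhdsWithin_neBot, Metric.mem_closure_iff]
        intro ε hε
        have h0 : 0 < min ε (t - a) := lt_min hε (by linarith [ht.1])
        have h1 : max a (t - min ε (t - a)/2) < t := by
          rw [max_lt_iff]
          exact ⟨ht.1, by linarith⟩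
        have h2 : t - min ε (t - a)/2 ≤ max a (t - min ε (t - a)/2) := le_max_right _ _
        have h3 : min ε (t - a) ≤ ε := min_le_left _ _
        refine ⟨max a (t - min ε (t - a)/2), ⟨le_max_left _ _, h1⟩, ?_⟩
        rw [Real.dist_eq, abs_of_nonneg (by linarith)]
        linarith
      obtain ⟨L, hL⟩ := exists_left_lim (g := fun r => cH (r, x)) (s := Icc a b) hvar t
      rw [hset] at hL
      exact ⟨L, hL⟩
    obtain ⟨S, hS1, hS2⟩ := hSEP
    refine ⟨cH, hjm, hS1.mono (range_subset_iff.2 hS2), ha, ?_, hc⟩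
    refine hgoodae.mono fun x hx => ⟨fun t ht => hrcH x t ht, fun t ht => hllH x hx t ht,
      hlcH x, ?_⟩
    exact ne_top_of_le_ne_top hx (hvarH x hx)


end NLS
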